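/- Let p, n ∈ ℕ with c = gcd(p, n) prime, d = n/c, fix y ∈ Z_n. For every nontrivial pointed coloring α_k of T̃(p,2) and every pointed coloring α_l, the number of pointed endomorphisms φ of (Z_n, y, y) with φ ∘ α_k = α_l is exactly d. -/

import Mathlib

lemma count_solutions (c d k l : ℕ) (hcp : c.Prime) (hd : 0 < d)
    (hk1 : 1 ≤ k) (hk2 : k < c) :
    Nat.card {s : ZMod (c*d) // (k : ZMod (c*d)) * (d : ZMod (c*d)) * s
      = (l : ZMod (c*d)) * (d : ZMod (c*d))} = d := by
  haveI : Fact c.Prime := ⟨hcp⟩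
  have hc0 : 0 < c := hcp.pos
  have hn0 : 0 < c * d := Nat.mul_pos hc0 hd
  haveI : NeZero (c*d) := ⟨hn0.ne'⟩
  set s0 : ℕ := k ^ (c - 2) * l with hs0
  -- Fermat: k * s0 ≡ l [MOD c]
  have hferm : k * s0 ≡ l [MOD c] := by
    have hk0 : (k : ZMod c) ≠ 0 := by
      intro h
      rw [ZMod.natCast_eq_zero_iff] at h
      exact absurd (Nat.le_of_dvd (by omega) h) (by omega)
    have h1 : (k : ZMod c) ^ (c - 1) = 1 := ZMod.pow_card_sub_one_eq_one hk0
    have h2 : ((k * s0 : ℕ) : ZMod c) = ((l : ℕ) : ZMod c) := by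
      rw [hs0]; push_cast
      rw [← mul_assoc, show (k : ZMod c) * (k:ZMod c) ^ (c-2) = (k:ZMod c)^(c-1) by
        rw [← pow_succ']; congr 1; omega, h1, one_mul]
    exact (ZMod.natCast_eq_natCast_iff _ _ _).mp h2
  -- membership of s0 + c*t
  have hmem : ∀ t : ℕ, (k : ZMod (c*d)) * (d : ZMod (c*d)) * ((s0 + c*t : ℕ) : ZMod (c*d))
      = (l : ZMod (c*d)) * (d : ZMod (c*d)) := by
    intro t
    have h1 : k * s0 * d ≡ l * d [MOD c * d] := Nat.ModEq.mul_right' d hferm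
    have h2 : k * c * d * t ≡ 0 [MOD c * d] :=
      (Nat.modEq_zero_iff_dvd).mpr ⟨k * t, by ring⟩
    have h4 : k * d * (s0 + c * t) ≡ l * d [MOD c * d] := by
      calc k * d * (s0 + c * t) = k * s0 * d + k * c * d * t := by ring
        _ ≡ l * d + 0 [MOD c*d] := h1.add h2
        _ = l * d := by ring
    have h5 := (ZMod.natCast_eq_natCast_iff _ _ _).mpr h4
    push_cast at h5
    push_cast
    linear_combination h5
  -- each solution s has s.val % c = s0 % c
  have hval : ∀ s : ZMod (c*d), (k : ZMod (c*d)) * (d : ZMod (c*d)) * s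
      = (l : ZMod (c*d)) * (d : ZMod (c*d)) → s.val % c = s0 % c := by
    intro s hs
    have hcast : ((s.val : ℕ) : ZMod (c*d)) = s := ZMod.natCast_zmod_val s
    have h6 : ((k * d * s.val : ℕ) : ZMod (c*d)) = ((l * d : ℕ) : ZMod (c*d)) := by
      push_cast
      rw [hcast]
      linear_combination hs
    have h7 : k * d * s.val ≡ l * d [MOD c * d] := (ZMod.natCast_eq_natCast_iff _ _ _).mp h6
    have h8 : ((c : ℤ) * d) ∣ ((l : ℤ) * d - k * d * s.val) := by
      have := h7.dvd
      push_cast at this ⊢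
      convert this using 2
    have h9 : (c : ℤ) ∣ ((l : ℤ) - k * s.val) := by
      rcases h8 with ⟨m, hm⟩
      refine ⟨m, ?_⟩
      have hd' : (d : ℤ) ≠ 0 := by exact_mod_cast hd.ne'
      have : ((l : ℤ) - k * s.val) * d = (c * m) * d := by linarith [hm]
      exact mul_right_cancel₀ hd' this
    -- also c ∣ l - k * s0
    have h10 : (c : ℤ) ∣ ((l : ℤ) - k * s0) := by
      have h := hferm.dvd
      push_cast at h
      exact h
    have h11 : (c : ℤ) ∣ (k : ℤ) * ((s.val : ℤ) - s0) := by
      have e : (k:ℤ) * ((s.val : ℤ) - s0) = ((l:ℤ) - k * s0) - ((l:ℤ) - k * s.val) := by ring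
      rw [e]; exact dvd_sub h10 h9
    have h12 : (c : ℤ) ∣ ((s.val : ℤ) - s0) := by
      have hcp' : Prime (c : ℤ) := Nat.prime_iff_prime_int.mp hcp
      rcases (hcp'.dvd_mul.mp h11) with h | h
      · exfalso
        rw [Int.natCast_dvd_natCast] at h
        exact absurd (Nat.le_of_dvd (by omega) h) (by omega)
      · exact h
    have h13 : (s.val : ℤ) ≡ (s0:ℤ) [ZMOD (c:ℤ)] := (Int.modEq_iff_dvd.mpr h12).symm
    have h14 : (s.val : ℤ) % c = (s0 : ℤ) % c := h13
    omega
  -- now count via two injections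
  rw [Nat.card_eq_fintype_card]
  apply le_antisymm
  · have hinj : Function.Injective
        (fun s : {s : ZMod (c*d) // (k : ZMod (c*d)) * (d : ZMod (c*d)) * s
          = (l : ZMod (c*d)) * (d : ZMod (c*d))} =>
          (⟨s.1.val / c, by
            have hv : s.1.val < c * d := ZMod.val_lt s.1
            exact Nat.div_lt_of_lt_mul (by omega)⟩ : Fin d)) := by
      intro s1 s2 h
      have hq : s1.1.val / c = s2.1.val / c := congrArg Fin.val h
      have e1 := hval s1.1 s1.2
      have e2 := hval s2.1 s2.2
      have hv : s1.1.val = s2.1.val := by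
        have d1 := Nat.div_add_mod s1.1.val c
        have d2 := Nat.div_add_mod s2.1.val c
        rw [← d1, ← d2, hq, e1, e2]
      exact Subtype.ext (ZMod.val_injective _ hv)
    simpa using Fintype.card_le_of_injective _ hinj
  · have hinj : Function.Injective
        (fun t : Fin d => (⟨((s0 + c * (t : ℕ) : ℕ) : ZMod (c*d)), hmem t⟩ :
          {s : ZMod (c*d) // (k : ZMod (c*d)) * (d : ZMod (c*d)) * s
          = (l : ZMod (c*d)) * (d : ZMod (c*d))})) := by
      intro t1 t2 h
      have h1 : ((s0 + c * (t1:ℕ) : ℕ) : ZMod (c*d)) = ((s0 + c * (t2:ℕ) : ℕ) : ZMod (c*d)) :=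
        congrArg Subtype.val h
      have h2 : s0 + c * (t1:ℕ) ≡ s0 + c * (t2:ℕ) [MOD c*d] :=
        (ZMod.natCast_eq_natCast_iff _ _ _).mp h1
      have h3 : c * (t1:ℕ) ≡ c * (t2:ℕ) [MOD c*d] := h2.add_left_cancel' s0
      have h4 : c * (t1:ℕ) = c * (t2:ℕ) := by
        have b1 : c * (t1:ℕ) < c * d := (Nat.mul_lt_mul_left hc0).mpr t1.2
        have b2 : c * (t2:ℕ) < c * d := (Nat.mul_lt_mul_left hc0).mpr t2.2
        have := h3
        unfold Nat.ModEq at this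
        rwa [Nat.mod_eq_of_lt b1, Nat.mod_eq_of_lt b2] at this
      exact Fin.ext (Nat.eq_of_mul_eq_mul_left hc0 h4)
    simpa using Fintype.card_le_of_injective _ hinj

lemma affine_of_quandle {n : ℕ} (φ : ZMod n → ZMod n)
    (hq : ∀ a b : ZMod n, φ (2 * b - a) = 2 * φ b - φ a)
    (y : ZMod n) (hy : φ y = y) (z : ZMod n) :
    φ (y + z) = y + (φ (y + 1) - y) * z := by
  set s := φ (y + 1) - y with hs
  have hnat : ∀ i : ℕ, φ (y + (i : ZMod n)) = y + s * i ∧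
      φ (y + ((i : ZMod n) + 1)) = y + s * ((i : ZMod n) + 1) := by
    intro i
    induction i with
    | zero => refine ⟨by simpa using hy, ?_⟩; push_cast; rw [hs]; ring_nf
    | succ i ih =>
      refine ⟨by push_cast; exact ih.2, ?_⟩
      have h := hq (y + (i : ZMod n)) (y + ((i : ZMod n) + 1))
      have e : 2 * (y + ((i : ZMod n) + 1)) - (y + (i : ZMod n)) = y + (((i:ℕ)+1 : ZMod n) + 1) := by
        push_cast; ring
      rw [e, ih.1, ih.2] at h
      push_cast
      rw [h]; ring
  have hneg : ∀ i : ℕ, φ (y - (i : ZMod n)) = y - s * i := by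
    intro i
    have h := hq (y + (i : ZMod n)) y
    have e : 2 * y - (y + (i : ZMod n)) = y - (i : ZMod n) := by ring
    rw [e, hy, (hnat i).1] at h
    rw [h]; ring
  obtain ⟨m, rfl⟩ := ZMod.intCast_surjective (n := n) z
  rcases le_or_gt 0 m with hm | hm
  · have : φ (y + (m.toNat : ZMod n)) = y + s * (m.toNat : ZMod n) := (hnat m.toNat).1
    rw [show ((m.toNat : ℕ) : ZMod n) = (m : ZMod n) by
      rw [← Int.cast_natCast]; congr 1; omega] at this
    exact this
  · have : φ (y - ((-m).toNat : ZMod n)) = y - s * ((-m).toNat : ZMod n) := hneg (-m).toNat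
    rw [show (((-m).toNat : ℕ) : ZMod n) = -(m : ZMod n) by
      rw [← Int.cast_natCast, ← Int.cast_neg]; congr 1; omega] at this
    rw [sub_neg_eq_add] at this
    rw [this]; ring

lemma count_solutions' (n c d k l : ℕ) (hn : n = c * d) (hcp : c.Prime) (hd : 0 < d)
    (hk1 : 1 ≤ k) (hk2 : k < c) :
    Nat.card {s : ZMod n // (k : ZMod n) * (d : ZMod n) * s
      = (l : ZMod n) * (d : ZMod n)} = d := by
  subst hn
  exact count_solutions c d k l hcp hd hk1 hk2

/-- With `c = gcd(p,n)` prime and `d = n/c`: for every nontrivial pointed coloring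
`α_k` of the `T(p,2)`-type linkoid and every pointed coloring `α_l`, exactly `d`
pointed endomorphisms `φ` of `(Z_n, y, y)` satisfy `φ ∘ α_k = α_l`. -/
theorem torus_quiver_arcs (p n : ℕ) (hp : 1 ≤ p) (hc : (Nat.gcd p n).Prime)
    (y : ZMod n) (k l : ℕ) (hk1 : 1 ≤ k) (hk2 : k < Nat.gcd p n)
    (hl : l < Nat.gcd p n) :
    let c : ℕ := Nat.gcd p n
    let d : ℕ := n / c
    let α : ℕ → ℕ → ZMod n :=
      fun k' m => y + (((m - 1) % p : ℕ) : ZMod n) * (k' : ZMod n) * (d : ZMod n)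
    Nat.card {φ : ZMod n → ZMod n //
      (∀ a b : ZMod n, φ (2 * b - a) = 2 * φ b - φ a) ∧ φ y = y ∧
      (∀ m : ℕ, 1 ≤ m → m ≤ p + 1 → φ (α k m) = α l m)} = d := by
  intro c d α
  have hα : α = fun (k' m : ℕ) => y + (((m - 1) % p : ℕ) : ZMod n) * ((k' : ℕ) : ZMod n) * (d : ZMod n) :=
    rfl
  have hcd : c = Nat.gcd p n := rfl
  have hdd : d = n / c := rfl
  have hc2 : 2 ≤ c := hc.two_le
  have hcdvd : c ∣ p := Nat.gcd_dvd_left p n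
  have hcn : c ∣ n := Nat.gcd_dvd_right p n
  have hp2 : 2 ≤ p := le_trans hc2 (Nat.le_of_dvd hp hcdvd)
  have hone : ((2 - 1) % p : ℕ) = 1 := by
    rw [show (2 - 1 : ℕ) = 1 from rfl, Nat.mod_eq_of_lt (by omega)]
  have hn : n = c * d := (Nat.mul_div_cancel' hcn).symm
  -- equivalence between the coloring-endomorphism set and a linear-equation set
  have e : {φ : ZMod n → ZMod n //
      (∀ a b : ZMod n, φ (2 * b - a) = 2 * φ b - φ a) ∧ φ y = y ∧
      (∀ m : ℕ, 1 ≤ m → m ≤ p + 1 → φ (α k m) = α l m)} ≃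
      {s : ZMod n // (k : ZMod n) * (d : ZMod n) * s = (l : ZMod n) * (d : ZMod n)} := by
    refine
      { toFun := fun φ => ⟨φ.1 (y + 1) - y, ?_⟩
        invFun := fun s => ⟨fun x => y + s.1 * (x - y), ?_, ?_, ?_⟩
        left_inv := ?_
        right_inv := ?_ }
    · -- the slope satisfies the equation
      obtain ⟨φ, hq, hy, hcol⟩ := φ
      have h2 := hcol 2 (by omega) (by omega)
      rw [hα] at h2
      simp only [hone] at h2
      have ha := affine_of_quandle φ hq y hy ((k : ZMod n) * (d : ZMod n))
      push_cast at h2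
      rw [show y + 1 * (k : ZMod n) * (d : ZMod n) = y + (k : ZMod n) * (d : ZMod n) by ring]
        at h2
      rw [ha] at h2
      linear_combination h2
    · intro a b; ring
    · simp
    · intro m h1 h2
      rw [hα]
      have hs := s.2
      simp only []
      linear_combination (((m - 1) % p : ℕ) : ZMod n) * hs
    · intro φ
      apply Subtype.ext
      funext x
      have ha := affine_of_quandle φ.1 φ.2.1 y φ.2.2.1 (x - y)
      rw [show y + (x - y) = x by ring] at ha
      exact ha.symm
    · intro s
      apply Subtype.ext
      show (y + s.1 * ((y + 1) - y)) - y = s.1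
      ring
  rw [Nat.card_congr e]
  rcases Nat.eq_zero_or_pos n with hn0 | hn0
  · -- n = 0 : both sides are 0
    have hd0 : d = 0 := by rw [hdd, hn0]; simp
    subst hn0
    rw [hd0]
    haveI : Infinite {s : ZMod 0 // (k : ZMod 0) * ((0:ℕ) : ZMod 0) * s
        = (l : ZMod 0) * ((0:ℕ) : ZMod 0)} := by
      refine Infinite.of_injective (fun z : ℤ => ⟨(z : ZMod 0), by simp; exact zero_mul (M₀ := ℤ) z⟩) ?_
      intro a b h
      exact Int.cast_injective (congrArg Subtype.val h)
    exact Nat.card_eq_zero_of_infinite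
  · have hd0 : 0 < d := by
      rw [hdd]
      exact Nat.div_pos (Nat.le_of_dvd hn0 hcn) (by omega)
    exact count_solutions' n c d k l hn hc hd0 hk1 hk2
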